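/- Let R, R* : ℝ → SO(3) be differentiable curves with Ṙ = R·hat(ω) and Ṙ* = R*·hat(ω*). Define the attitude error e_R = (1/2)·vee(R*ᵀR − RᵀR*) and angular velocity error e_ω = ω − RᵀR*ω*. Then ė_R = E(R, R*)·e_ω where E(R, R*) = (1/2)(tr(RᵀR*)·I − RᵀR*). -/

import Mathlib

open Matrix

def hat (v : Fin 3 → ℝ) : Matrix (Fin 3) (Fin 3) ℝ :=
  !![0, -v 2, v 1; v 2, 0, -v 0; -v 1, v 0, 0]

def vee (A : Matrix (Fin 3) (Fin 3) ℝ) : Fin 3 → ℝ := ![A 2 1, A 0 2, A 1 0]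

/-- Cayley–Hamilton style identity for `SO(3)`: `Q² - tr(Q)·Q + tr(Q)·I = Qᵀ`. -/
lemma so3_key (Q : Matrix (Fin 3) (Fin 3) ℝ) (h1 : Qᵀ * Q = 1) (h2 : Q.det = 1) :
    Q * Q - Q.trace • Q + Q.trace • (1 : Matrix (Fin 3) (Fin 3) ℝ) = Qᵀ := by
  have hQ : Q * Qᵀ = 1 := mul_eq_one_comm.mp h1
  have hadj : Q.adjugate = Qᵀ := by
    calc Q.adjugate = Q.adjugate * (Q * Qᵀ) := by rw [hQ, mul_one]
      _ = Q.adjugate * Q * Qᵀ := by rw [Matrix.mul_assoc]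
      _ = Qᵀ := by rw [Matrix.adjugate_mul, h2, one_smul, Matrix.one_mul]
  have e : ∀ a b : Fin 3, Q.adjugate a b = Q b a := by
    intro a b; rw [hadj]; rfl
  have e00 : Q 1 1 * Q 2 2 - Q 1 2 * Q 2 1 = Q 0 0 := by
    simpa [Matrix.adjugate_fin_three] using e 0 0
  have e01 : -(Q 0 1 * Q 2 2) + Q 0 2 * Q 2 1 = Q 1 0 := by
    simpa [Matrix.adjugate_fin_three] using e 0 1
  have e02 : Q 0 1 * Q 1 2 - Q 0 2 * Q 1 1 = Q 2 0 := by
    simpa [Matrix.adjugate_fin_three] using e 0 2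
  have e10 : -(Q 1 0 * Q 2 2) + Q 1 2 * Q 2 0 = Q 0 1 := by
    simpa [Matrix.adjugate_fin_three] using e 1 0
  have e11 : Q 0 0 * Q 2 2 - Q 0 2 * Q 2 0 = Q 1 1 := by
    simpa [Matrix.adjugate_fin_three] using e 1 1
  have e12 : -(Q 0 0 * Q 1 2) + Q 0 2 * Q 1 0 = Q 2 1 := by
    simpa [Matrix.adjugate_fin_three] using e 1 2
  have e20 : Q 1 0 * Q 2 1 - Q 1 1 * Q 2 0 = Q 0 2 := by
    simpa [Matrix.adjugate_fin_three] using e 2 0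
  have e21 : -(Q 0 0 * Q 2 1) + Q 0 1 * Q 2 0 = Q 1 2 := by
    simpa [Matrix.adjugate_fin_three] using e 2 1
  have e22 : Q 0 0 * Q 1 1 - Q 0 1 * Q 1 0 = Q 2 2 := by
    simpa [Matrix.adjugate_fin_three] using e 2 2
  ext a b
  fin_cases a <;> fin_cases b <;>
    simp [Matrix.mul_apply, Fin.sum_univ_three, Matrix.trace_fin_three,
      Matrix.one_apply] <;>
  first
    | linear_combination e00 - e00 - e11 - e22
    | linear_combination e11 - e00 - e11 - e22
    | linear_combination e22 - e00 - e11 - e22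
    | linear_combination e01
    | linear_combination e02
    | linear_combination e10
    | linear_combination e12
    | linear_combination e20
    | linear_combination e21

set_option maxRecDepth 8000 in
set_option maxHeartbeats 2000000 in
/-- Let `R, R* : ℝ → SO(3)` with `Ṙ = R·hat(ω)`, `Ṙ* = R*·hat(ω*)`. With
`e_R = (1/2)·vee(R*ᵀR − RᵀR*)` and `e_ω = ω − RᵀR*ω*`, one has
`ė_R = E(R,R*)·e_ω` where `E(R,R*) = (1/2)(tr(RᵀR*)·I − RᵀR*)`. -/
theorem stmt12 (R Rs : ℝ → Matrix (Fin 3) (Fin 3) ℝ) (ω ωs : ℝ → Fin 3 → ℝ)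
    (hSO : ∀ t, (R t)ᵀ * R t = 1 ∧ (R t).det = 1)
    (hSOs : ∀ t, (Rs t)ᵀ * Rs t = 1 ∧ (Rs t).det = 1)
    (hR : ∀ t i j, HasDerivAt (fun s => R s i j) ((R t * hat (ω t)) i j) t)
    (hRs : ∀ t i j, HasDerivAt (fun s => Rs s i j) ((Rs t * hat (ωs t)) i j) t) :
    ∀ t i, HasDerivAt
      (fun s => ((1 / 2 : ℝ) • vee ((Rs s)ᵀ * R s - (R s)ᵀ * Rs s)) i)
      ((((1 / 2 : ℝ) • (((R t)ᵀ * Rs t).trace • (1 : Matrix (Fin 3) (Fin 3) ℝ)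
          - (R t)ᵀ * Rs t)) *ᵥ (ω t - ((R t)ᵀ * Rs t) *ᵥ ωs t)) i) t := by
  intro t i
  obtain ⟨hA, hdA⟩ := hSO t
  obtain ⟨hB, hdB⟩ := hSOs t
  have hAA : R t * (R t)ᵀ = 1 := mul_eq_one_comm.mp hA
  have hQ1 : ((R t)ᵀ * Rs t)ᵀ * ((R t)ᵀ * Rs t) = 1 := by
    rw [Matrix.transpose_mul, Matrix.transpose_transpose, Matrix.mul_assoc,
      ← Matrix.mul_assoc (R t), hAA, Matrix.one_mul, hB]
  have hQd : ((R t)ᵀ * Rs t).det = 1 := by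
    rw [Matrix.det_mul, Matrix.det_transpose, hdA, hdB, one_mul]
  have hkey := so3_key _ hQ1 hQd
  -- entrywise derivative of the matrix `R*ᵀR − RᵀR*`
  have hD : ∀ a b : Fin 3, HasDerivAt (fun s => ((Rs s)ᵀ * R s - (R s)ᵀ * Rs s) a b)
      ((∑ k, ((Rs t * hat (ωs t)) k a * R t k b + Rs t k a * (R t * hat (ω t)) k b))
        - ∑ k, ((R t * hat (ω t)) k a * Rs t k b + R t k a * (Rs t * hat (ωs t)) k b)) t := by
    intro a b
    have hfun : (fun s => ((Rs s)ᵀ * R s - (R s)ᵀ * Rs s) a b)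
        = fun s => (∑ k, Rs s k a * R s k b) - ∑ k, R s k a * Rs s k b := by
      funext s
      simp [Matrix.mul_apply, Matrix.sub_apply, Matrix.transpose_apply]
    rw [hfun]
    exact (HasDerivAt.fun_sum fun k _ => (hRs t k a).mul (hR t k b)).sub
      (HasDerivAt.fun_sum fun k _ => (hR t k a).mul (hRs t k b))
  have key0 := congrFun (congrFun hkey 0)
  have key1 := congrFun (congrFun hkey 1)
  have key2 := congrFun (congrFun hkey 2)
  fin_cases i <;>
    simp only [Pi.smul_apply, smul_eq_mul, vee, Matrix.cons_val_zero, Matrix.cons_val_one,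
      Matrix.head_cons, Fin.mk_one, Fin.mk_zero, Fin.isValue, Matrix.cons_val_two,
      Matrix.tail_cons]
  · convert (hD 2 1).const_mul (1/2 : ℝ) using 1
    · rfl
    · rfl
    have k0 := key0 0; have k1 := key0 1; have k2 := key0 2
    simp [Matrix.mul_apply, Matrix.sub_apply, Matrix.add_apply, Matrix.smul_apply,
      Matrix.transpose_apply, Matrix.trace_fin_three, Matrix.mulVec, dotProduct,
      Matrix.one_apply, Fin.sum_univ_three, hat] at k0 k1 k2 ⊢
    linear_combination (ωs t 0 / 2) * k0 + (ωs t 1 / 2) * k1 + (ωs t 2 / 2) * k2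
  · convert (hD 0 2).const_mul (1/2 : ℝ) using 1
    · rfl
    · rfl
    have k0 := key1 0; have k1 := key1 1; have k2 := key1 2
    simp [Matrix.mul_apply, Matrix.sub_apply, Matrix.add_apply, Matrix.smul_apply,
      Matrix.transpose_apply, Matrix.trace_fin_three, Matrix.mulVec, dotProduct,
      Matrix.one_apply, Fin.sum_univ_three, hat] at k0 k1 k2 ⊢
    linear_combination (ωs t 0 / 2) * k0 + (ωs t 1 / 2) * k1 + (ωs t 2 / 2) * k2
  · convert (hD 1 0).const_mul (1/2 : ℝ) using 1
    · rfl
    · rfl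
    · rfl
    have k0 := key2 0; have k1 := key2 1; have k2 := key2 2
    simp [Matrix.mul_apply, Matrix.sub_apply, Matrix.add_apply, Matrix.smul_apply,
      Matrix.transpose_apply, Matrix.trace_fin_three, Matrix.mulVec, dotProduct,
      Matrix.one_apply, Fin.sum_univ_three, hat] at k0 k1 k2 ⊢
    linear_combination (ωs t 0 / 2) * k0 + (ωs t 1 / 2) * k1 + (ωs t 2 / 2) * k2
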